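/- arXiv:1209.2932 — 8 statements merged into one kernel-verified Lean document; each statement's English description precedes it below -/
import Mathlib

section
/- Let b₁₂, b₁₃, b₂₁, b₂₃ ∈ ℝ³ be unit vectors with b₁₂₃ := b₁₂ × b₁₃ ≠ 0 and b₂₁₃ := b₂₁ × b₂₃ ≠ 0. Suppose Q, Q′ ∈ SO(3) both satisfy the two line-of-sight constraints b₁₂ = −Qᵀ b₂₁ and b₁₂₃/‖b₁₂₃‖ = −Qᵀ b₂₁₃/‖b₂₁₃‖ (and likewise with Q replaced by Q′). Then Q = Q′; i.e., the relative attitude is uniquely determined by the four line-of-sight measurements. -/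
noncomputable section
open Matrix

/-- Vectors in ℝ³ with the Euclidean norm. -/
abbrev V3 : Type := EuclideanSpace ℝ (Fin 3)

/-- Real 3×3 matrices. -/
abbrev M3 : Type := Matrix (Fin 3) (Fin 3) ℝ

/-- The special orthogonal group SO(3): RᵀR = I and det R = 1. -/
def SO3 (R : M3) : Prop := Rᵀ * R = 1 ∧ R.det = 1

/-- Action of a matrix on a vector. -/
def matVec (A : M3) (v : V3) : V3 := WithLp.toLp 2 (A.mulVec v)

/-- Cross product on ℝ³. -/
def cross3 (u v : V3) : V3 :=
  WithLp.toLp 2 ![u 1 * v 2 - u 2 * v 1, u 2 * v 0 - u 0 * v 2, u 0 * v 1 - u 1 * v 0]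

/-- The hat map: x̂ y = x × y. -/
def hat (x : V3) : M3 :=
  !![0, -x 2, x 1; x 2, 0, -x 0; -x 1, x 0, 0]

/-- The vee map, inverse of the hat map on skew-symmetric matrices. -/
def vee (A : M3) : V3 := WithLp.toLp 2 ![A 2 1, A 0 2, A 1 0]

/-- Dot product on ℝ³. -/
def dot3 (u v : V3) : ℝ := u 0 * v 0 + u 1 * v 1 + u 2 * v 2

attribute [local instance] Matrix.normedAddCommGroup Matrix.normedSpace

lemma aux_cross_poly (A : M3) (u v : V3) :
    matVec Aᵀ (cross3 (matVec A u) (matVec A v)) = A.det • cross3 u v := by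
  ext i
  fin_cases i <;>
    simp [matVec, cross3, Matrix.mulVec, dotProduct, Fin.sum_univ_three,
      Matrix.det_fin_three, PiLp.smul_apply, smul_eq_mul] <;> ring

lemma so3_cross (R : M3) (hR : SO3 R) (u v : V3) :
    matVec R (cross3 u v) = cross3 (matVec R u) (matVec R v) := by
  have h1 : R * Rᵀ = 1 := mul_eq_one_comm.mp hR.1
  have := aux_cross_poly R u v
  rw [hR.2, one_smul] at this
  calc matVec R (cross3 u v)
      = matVec R (matVec Rᵀ (cross3 (matVec R u) (matVec R v))) := by rw [this]
    _ = matVec (R * Rᵀ) (cross3 (matVec R u) (matVec R v)) := by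
        simp [matVec, Matrix.mulVec_mulVec]
    _ = _ := by simp [h1, matVec]

lemma dot3_self_ne (v : V3) (hv : v ≠ 0) : dot3 v v ≠ 0 := by
  intro h0
  apply hv
  have h0' : v 0 * v 0 + v 1 * v 1 + v 2 * v 2 = 0 := h0
  have e0 : v 0 = 0 := by nlinarith [sq_nonneg (v 0), sq_nonneg (v 1), sq_nonneg (v 2)]
  have e1 : v 1 = 0 := by nlinarith [sq_nonneg (v 0), sq_nonneg (v 1), sq_nonneg (v 2)]
  have e2 : v 2 = 0 := by nlinarith [sq_nonneg (v 0), sq_nonneg (v 1), sq_nonneg (v 2)]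
  ext i
  fin_cases i
  · exact e0
  · exact e1
  · exact e2

lemma dot3_eq_normsq (v : V3) : dot3 v v = ‖v‖ ^ 2 := by
  rw [EuclideanSpace.norm_eq]
  rw [Real.sq_sqrt (by positivity)]
  simp [dot3, Fin.sum_univ_three, sq]

/-- the relative attitude is uniquely determined by the two
line-of-sight constraints. -/
theorem relative_attitude_unique
    (b₁₂ b₁₃ b₂₁ b₂₃ : V3)
    (hb₁₂ : ‖b₁₂‖ = 1) (hb₁₃ : ‖b₁₃‖ = 1) (hb₂₁ : ‖b₂₁‖ = 1) (hb₂₃ : ‖b₂₃‖ = 1)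
    (b₁₂₃ b₂₁₃ : V3) (hb₁₂₃ : b₁₂₃ = cross3 b₁₂ b₁₃) (hb₂₁₃ : b₂₁₃ = cross3 b₂₁ b₂₃)
    (h₁ : b₁₂₃ ≠ 0) (h₂ : b₂₁₃ ≠ 0)
    (Q Q' : M3) (hQ : SO3 Q) (hQ' : SO3 Q')
    (hQa : b₁₂ = -matVec Qᵀ b₂₁)
    (hQb : ‖b₁₂₃‖⁻¹ • b₁₂₃ = -(‖b₂₁₃‖⁻¹ • matVec Qᵀ b₂₁₃))
    (hQa' : b₁₂ = -matVec Q'ᵀ b₂₁)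
    (hQb' : ‖b₁₂₃‖⁻¹ • b₁₂₃ = -(‖b₂₁₃‖⁻¹ • matVec Q'ᵀ b₂₁₃)) :
    Q = Q' := by
  -- SO3 of transposes
  have hQT : SO3 Qᵀ := by
    constructor
    · rw [Matrix.transpose_transpose]; exact mul_eq_one_comm.mp hQ.1
    · rw [Matrix.det_transpose]; exact hQ.2
  have hQ'T : SO3 Q'ᵀ := by
    constructor
    · rw [Matrix.transpose_transpose]; exact mul_eq_one_comm.mp hQ'.1
    · rw [Matrix.det_transpose]; exact hQ'.2
  -- agreement on b₂₁
  have ha : matVec Qᵀ b₂₁ = matVec Q'ᵀ b₂₁ := by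
    have := hQa.symm.trans hQa'
    have := neg_injective this
    exact this
  -- agreement on b₂₁₃
  have hnorm : ‖b₂₁₃‖ ≠ 0 := norm_ne_zero_iff.mpr h₂
  have hb : matVec Qᵀ b₂₁₃ = matVec Q'ᵀ b₂₁₃ := by
    have h := (hQb.symm.trans hQb')
    have h2 : ‖b₂₁₃‖⁻¹ • (matVec Qᵀ b₂₁₃) = ‖b₂₁₃‖⁻¹ • (matVec Q'ᵀ b₂₁₃) :=
      neg_injective h
    exact smul_right_injective V3 (inv_ne_zero hnorm) h2
  -- agreement on the cross product
  have hc : matVec Qᵀ (cross3 b₂₁ b₂₁₃) = matVec Q'ᵀ (cross3 b₂₁ b₂₁₃) := by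
    rw [so3_cross Qᵀ hQT, so3_cross Q'ᵀ hQ'T, ha, hb]
  -- the three vectors form a basis: build matrix with columns a, b, c
  set c : V3 := cross3 b₂₁ b₂₁₃ with hc_def
  set M : M3 := Matrix.of fun i j => (![b₂₁, b₂₁₃, c] j) i with hM
  -- det M = dot3 c c ≠ 0
  have hdotab : dot3 b₂₁ b₂₁₃ = 0 := by
    rw [hb₂₁₃]; simp [dot3, cross3]; ring
  have haa : dot3 b₂₁ b₂₁ = 1 := by rw [dot3_eq_normsq, hb₂₁]; norm_num
  have hbb : dot3 b₂₁₃ b₂₁₃ ≠ 0 := dot3_self_ne _ h₂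
  have hlag : dot3 c c = dot3 b₂₁ b₂₁ * dot3 b₂₁₃ b₂₁₃ - (dot3 b₂₁ b₂₁₃) ^ 2 := by
    simp [hc_def, dot3, cross3]; ring
  have hcc : dot3 c c ≠ 0 := by
    rw [hlag, haa, hdotab]; simpa using hbb
  have hdetM : M.det = dot3 c c := by
    simp [hM, Matrix.det_fin_three, dot3, hc_def, cross3]; ring
  have hMdet : IsUnit M.det := by
    rw [hdetM]; exact (isUnit_iff_ne_zero).mpr hcc
  -- Qᵀ * M = Q'ᵀ * M
  have hmul : Qᵀ * M = Q'ᵀ * M := by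
    ext i j
    have key : ∀ (A : M3), (A * M) i j = (matVec A (![b₂₁, b₂₁₃, c] j)) i := by
      intro A
      simp [matVec, Matrix.mul_apply, Matrix.mulVec, dotProduct, hM]
    rw [key, key]
    fin_cases j
    · simp [ha]
    · simp [hb]
    · simp [hc]
  have hT : Qᵀ = Q'ᵀ := by
    have hinv : M * M⁻¹ = 1 := Matrix.mul_nonsing_inv M hMdet
    calc Qᵀ = Qᵀ * (M * M⁻¹) := by rw [hinv, mul_one]
      _ = (Qᵀ * M) * M⁻¹ := by rw [mul_assoc]
      _ = (Q'ᵀ * M) * M⁻¹ := by rw [hmul]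
      _ = Q'ᵀ * (M * M⁻¹) := by rw [mul_assoc]
      _ = Q'ᵀ := by rw [hinv, mul_one]
  calc Q = Qᵀᵀ := (Matrix.transpose_transpose Q).symm
    _ = Q'ᵀᵀ := by rw [hT]
    _ = Q' := Matrix.transpose_transpose Q'
end
end

section
/- With the configuration error vectors defined from the line-of-sight measurements and the desired relative attitude, one has e₁₂ = −Q^d₂₁ e₂₁, and consequently ‖e₁₂‖ = ‖e₂₁‖. -/
noncomputable section
open Matrix

attribute [local instance] Matrix.normedAddCommGroup Matrix.normedSpace

lemma adj_eq (Q : M3) (h : Qᵀ * Q = 1) (hd : Q.det = 1) : Q.adjugate = Qᵀ := by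
  have h1 : Q * Q.adjugate = 1 := by rw [Matrix.mul_adjugate, hd, one_smul]
  calc Q.adjugate = (Qᵀ * Q) * Q.adjugate := by rw [h, one_mul]
    _ = Qᵀ * (Q * Q.adjugate) := by rw [Matrix.mul_assoc]
    _ = Qᵀ := by rw [h1, mul_one]

lemma cross_mulVec (A : M3) (u v : V3) :
    cross3 (matVec A u) (matVec A v) = matVec A.adjugateᵀ (cross3 u v) := by
  ext i
  fin_cases i <;>
    simp [cross3, matVec, Matrix.mulVec, dotProduct, Fin.sum_univ_three,
      Matrix.adjugate_fin_three, Matrix.transpose_apply] <;> ring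

lemma SO3_key (Q : M3) (hQ : SO3 Q) (u v : V3) :
    cross3 (matVec Q u) (matVec Q v) = matVec Q (cross3 u v) := by
  rw [cross_mulVec, adj_eq Q hQ.1 hQ.2, Matrix.transpose_transpose]

lemma SO3_transpose (Q : M3) (hQ : SO3 Q) : SO3 Qᵀ := by
  refine ⟨?_, by rw [Matrix.det_transpose]; exact hQ.2⟩
  rw [Matrix.transpose_transpose]
  exact mul_eq_one_comm.mp hQ.1

lemma cross3_anticomm (u v : V3) : cross3 u v = -cross3 v u := by
  ext i; fin_cases i <;> simp [cross3] <;> ring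

lemma norm_mulVec (Q : M3) (h : Qᵀ * Q = 1) (x : V3) : ‖matVec Q x‖ = ‖x‖ := by
  have key : ∀ i j, (Qᵀ*Q) i j = (1:M3) i j := fun i j => by rw [h]
  have h00 := key 0 0; have h01 := key 0 1; have h02 := key 0 2
  have h11 := key 1 1; have h12 := key 1 2; have h22 := key 2 2
  simp [Matrix.mul_apply, Fin.sum_univ_three, Matrix.one_apply, Matrix.transpose_apply] at h00 h01 h02 h11 h12 h22
  rw [EuclideanSpace.norm_eq, EuclideanSpace.norm_eq]
  congr 1
  simp [matVec, Matrix.mulVec, dotProduct, Fin.sum_univ_three, sq_abs]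
  linear_combination (x 0)^2 * h00 + (x 1)^2 * h11 + (x 2)^2 * h22 +
    2*(x 0)*(x 1)*h01 + 2*(x 0)*(x 2)*h02 + 2*(x 1)*(x 2)*h12

lemma matVec_mul (A B : M3) (v : V3) : matVec (A*B) v = matVec A (matVec B v) := by
  simp [matVec, Matrix.mulVec_mulVec]

lemma matVec_one (v : V3) : matVec 1 v = v := by simp [matVec]

lemma matVec_smul (A : M3) (c : ℝ) (v : V3) : matVec A (c • v) = c • matVec A v := by
  ext i
  simp [matVec, Matrix.mulVec, dotProduct, Fin.sum_univ_three, PiLp.smul_apply]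
  ring

lemma matVec_add (A : M3) (u v : V3) : matVec A (u + v) = matVec A u + matVec A v := by
  ext i
  simp [matVec, Matrix.mulVec, dotProduct, Fin.sum_univ_three, PiLp.add_apply]
  ring

/-- e₁₂ = −Q^d₂₁ e₂₁ and ‖e₁₂‖ = ‖e₂₁‖. -/
theorem error_vector_relation
    (b₁₂ b₁₃ b₂₁ b₂₃ : V3)
    (hb₁₂ : ‖b₁₂‖ = 1) (hb₁₃ : ‖b₁₃‖ = 1) (hb₂₁ : ‖b₂₁‖ = 1) (hb₂₃ : ‖b₂₃‖ = 1)
    (b₁₂₃ b₂₁₃ : V3) (hb₁₂₃ : b₁₂₃ = cross3 b₁₂ b₁₃) (hb₂₁₃ : b₂₁₃ = cross3 b₂₁ b₂₃)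
    (a₁₂ : ℝ) (ha₁₂ : a₁₂ = ‖b₂₁₃‖ * ‖b₁₂₃‖) (ha : a₁₂ ≠ 0)
    (Qd₁₂ Qd₂₁ : M3) (hQd : SO3 Qd₁₂) (hQd₂₁ : Qd₂₁ = Qd₁₂ᵀ)
    (kα kβ : ℝ) (hkα : 0 < kα) (hkβ : 0 < kβ)
    (eα₁₂ eα₂₁ eβ₁₂ eβ₂₁ e₁₂ e₂₁ : V3)
    (heα₁₂ : eα₁₂ = cross3 (matVec Qd₂₁ b₂₁) b₁₂)
    (heα₂₁ : eα₂₁ = cross3 (matVec Qd₁₂ b₁₂) b₂₁)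
    (heβ₁₂ : eβ₁₂ = a₁₂⁻¹ • cross3 (matVec Qd₂₁ b₂₁₃) b₁₂₃)
    (heβ₂₁ : eβ₂₁ = a₁₂⁻¹ • cross3 (matVec Qd₁₂ b₁₂₃) b₂₁₃)
    (he₁₂ : e₁₂ = kα • eα₁₂ + kβ • eβ₁₂)
    (he₂₁ : e₂₁ = kα • eα₂₁ + kβ • eβ₂₁) :
    e₁₂ = -matVec Qd₂₁ e₂₁ ∧ ‖e₁₂‖ = ‖e₂₁‖ := by
  subst hQd₂₁
  have hT : SO3 Qd₁₂ᵀ := SO3_transpose _ hQd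
  have hQQ : Qd₁₂ᵀ * Qd₁₂ = 1 := hQd.1
  have hcomp : ∀ x : V3, matVec Qd₁₂ᵀ (matVec Qd₁₂ x) = x := fun x => by
    rw [← matVec_mul, hQQ, matVec_one]
  have hα : matVec Qd₁₂ᵀ eα₂₁ = -eα₁₂ := by
    rw [heα₂₁, heα₁₂, ← SO3_key _ hT, hcomp, cross3_anticomm]
  have hβ : matVec Qd₁₂ᵀ eβ₂₁ = -eβ₁₂ := by
    rw [heβ₂₁, heβ₁₂, matVec_smul, ← SO3_key _ hT, hcomp, cross3_anticomm, smul_neg]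
  have hmain : e₁₂ = -matVec Qd₁₂ᵀ e₂₁ := by
    rw [he₁₂, he₂₁]
    rw [matVec_add, matVec_smul, matVec_smul, hα, hβ]; module
  refine ⟨hmain, ?_⟩
  rw [hmain, norm_neg, norm_mulVec _ hT.1]
end
end

section
/- Under the stated geometric assumptions, the configuration error function admits the matrix trace representation Ψ₁₂ = kᵅ + kᵝ − tr(R₂ᵀ K₁₂ R₁ Q^d₂₁), where K₁₂ = kᵅ s₁₂ s₁₂ᵀ + (kᵝ/‖s₁₂₃‖²) s₁₂₃ s₁₂₃ᵀ. -/
noncomputable section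
open Matrix

attribute [local instance] Matrix.normedAddCommGroup Matrix.normedSpace

lemma cross3_adj (A : M3) (u v : V3) :
    cross3 (matVec A u) (matVec A v) = matVec (A.adjugate)ᵀ (cross3 u v) := by
  ext i
  fin_cases i <;>
    simp [cross3, matVec, Matrix.mulVec, dotProduct, Fin.sum_univ_three,
      Matrix.adjugate_fin_three, Matrix.transpose_apply] <;> ring

lemma cross_rot (R : M3) (h : Rᵀ * R = 1) (hd : R.det = 1) (u v : V3) :
    cross3 (matVec Rᵀ u) (matVec Rᵀ v) = matVec Rᵀ (cross3 u v) := by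
  have h1 : Rᵀ * Rᵀᵀ = 1 := by rwa [Matrix.transpose_transpose]
  have hinv : (Rᵀ)⁻¹ = Rᵀᵀ := Matrix.inv_eq_right_inv h1
  have hdet : (Rᵀ).det = 1 := by rwa [Matrix.det_transpose]
  have hadj : (Rᵀ).adjugate = R := by
    have h2 := Matrix.inv_def (Rᵀ)
    rw [hdet, hinv, Matrix.transpose_transpose, Ring.inverse_one, one_smul] at h2
    exact h2.symm
  rw [cross3_adj, hadj]

lemma norm_mulVec_s8 (R : M3) (h : Rᵀ * R = 1) (v w : V3) (hw : w = matVec R v) :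
    ‖w‖ = ‖v‖ := by
  rw [EuclideanSpace.norm_eq, EuclideanSpace.norm_eq]
  subst hw
  congr 1
  have h00 : (Rᵀ * R) 0 0 = (1 : M3) 0 0 := by rw [h]
  have h01 : (Rᵀ * R) 0 1 = (1 : M3) 0 1 := by rw [h]
  have h02 : (Rᵀ * R) 0 2 = (1 : M3) 0 2 := by rw [h]
  have h11 : (Rᵀ * R) 1 1 = (1 : M3) 1 1 := by rw [h]
  have h12 : (Rᵀ * R) 1 2 = (1 : M3) 1 2 := by rw [h]
  have h22 : (Rᵀ * R) 2 2 = (1 : M3) 2 2 := by rw [h]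
  simp [Matrix.mul_apply, Matrix.transpose_apply, Fin.sum_univ_three,
    Matrix.one_apply] at h00 h01 h02 h11 h12 h22
  simp only [matVec, Matrix.mulVec, dotProduct, Fin.sum_univ_three,
    Real.norm_eq_abs, sq_abs]
  linear_combination (v 0)^2 * h00 + (v 1)^2 * h11 + (v 2)^2 * h22 +
    2 * (v 0) * (v 1) * h01 + 2 * (v 0) * (v 2) * h02 + 2 * (v 1) * (v 2) * h12

lemma trace_rank_one (A B Q : M3) (v : V3) :
    Matrix.trace (Aᵀ * vecMulVec v v * B * Qᵀ)
      = dot3 (matVec Aᵀ v) (matVec Q (matVec Bᵀ v)) := by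
  simp [Matrix.trace, Matrix.diag, Matrix.mul_apply, Matrix.vecMulVec_apply,
    dot3, matVec, Matrix.mulVec, dotProduct, Matrix.transpose_apply,
    Fin.sum_univ_three]
  ring

lemma matVec_neg (A : M3) (v : V3) : matVec A (-v) = -matVec A v := by
  ext i; simp [matVec, Matrix.mulVec_neg]

lemma dot3_neg_left (u w : V3) : dot3 (-u) w = - dot3 u w := by
  simp [dot3]; ring

lemma dot3_smul_left (c : ℝ) (u w : V3) : dot3 (c • u) w = c * dot3 u w := by
  simp [dot3, PiLp.smul_apply, smul_eq_mul]; ring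

/-- matrix trace representation of the configuration error function. -/
theorem error_function_trace_form
    (s₁₂ s₁₃ s₂₁ s₂₃ : V3)
    (hs₁₂ : ‖s₁₂‖ = 1) (hs₁₃ : ‖s₁₃‖ = 1) (hs₂₁ : ‖s₂₁‖ = 1) (hs₂₃ : ‖s₂₃‖ = 1)
    (hopp : s₁₂ = -s₂₁)
    (s₁₂₃ s₂₁₃ : V3) (hs₁₂₃ : s₁₂₃ = cross3 s₁₂ s₁₃) (hs₂₁₃ : s₂₁₃ = cross3 s₂₁ s₂₃)
    (h₁ : s₁₂₃ ≠ 0) (h₂ : s₂₁₃ ≠ 0)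
    (hnormal : ‖s₂₁₃‖⁻¹ • s₂₁₃ = -(‖s₁₂₃‖⁻¹ • s₁₂₃))
    (R₁ R₂ : M3) (hR₁ : SO3 R₁) (hR₂ : SO3 R₂)
    (b₁₂ b₁₃ b₂₁ b₂₃ b₁₂₃ b₂₁₃ : V3)
    (hb₁₂ : b₁₂ = matVec R₁ᵀ s₁₂) (hb₁₃ : b₁₃ = matVec R₁ᵀ s₁₃)
    (hb₂₁ : b₂₁ = matVec R₂ᵀ s₂₁) (hb₂₃ : b₂₃ = matVec R₂ᵀ s₂₃)
    (hb₁₂₃ : b₁₂₃ = cross3 b₁₂ b₁₃) (hb₂₁₃ : b₂₁₃ = cross3 b₂₁ b₂₃)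
    (a₁₂ : ℝ) (ha₁₂ : a₁₂ = ‖b₂₁₃‖ * ‖b₁₂₃‖)
    (Qd₁₂ Qd₂₁ : M3) (hQd : SO3 Qd₁₂) (hQd₂₁ : Qd₂₁ = Qd₁₂ᵀ)
    (kα kβ : ℝ) (hkα : 0 < kα) (hkβ : 0 < kβ)
    (Ψ : ℝ)
    (hΨ : Ψ = kα * (1 + dot3 b₂₁ (matVec Qd₁₂ b₁₂))
        + kβ * (1 + a₁₂⁻¹ * dot3 b₂₁₃ (matVec Qd₁₂ b₁₂₃)))
    (K : M3)
    (hK : K = kα • vecMulVec s₁₂ s₁₂ + (kβ / ‖s₁₂₃‖ ^ 2) • vecMulVec s₁₂₃ s₁₂₃) :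
    Ψ = kα + kβ - Matrix.trace (R₂ᵀ * K * R₁ * Qd₂₁) := by
  obtain ⟨hR₁o, hR₁d⟩ := hR₁
  obtain ⟨hR₂o, hR₂d⟩ := hR₂
  have hR₁o' : R₁ᵀᵀ * R₁ᵀ = 1 := by
    rw [Matrix.transpose_transpose]; exact mul_eq_one_comm.mp hR₁o
  have hR₂o' : R₂ᵀᵀ * R₂ᵀ = 1 := by
    rw [Matrix.transpose_transpose]; exact mul_eq_one_comm.mp hR₂o
  have hn : ‖s₁₂₃‖ ≠ 0 := norm_ne_zero_iff.mpr h₁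
  have hm : ‖s₂₁₃‖ ≠ 0 := norm_ne_zero_iff.mpr h₂
  set n := ‖s₁₂₃‖ with hn_def
  set m := ‖s₂₁₃‖ with hm_def
  -- cross products of rotated vectors
  have hb123 : b₁₂₃ = matVec R₁ᵀ s₁₂₃ := by
    rw [hb₁₂₃, hb₁₂, hb₁₃, hs₁₂₃]
    exact cross_rot R₁ hR₁o hR₁d _ _
  have hb213 : b₂₁₃ = matVec R₂ᵀ s₂₁₃ := by
    rw [hb₂₁₃, hb₂₁, hb₂₃, hs₂₁₃]
    exact cross_rot R₂ hR₂o hR₂d _ _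
  -- norms
  have hnb123 : ‖b₁₂₃‖ = n := by rw [hb123]; exact norm_mulVec_s8 R₁ᵀ hR₁o' s₁₂₃ _ rfl
  have hnb213 : ‖b₂₁₃‖ = m := by rw [hb213]; exact norm_mulVec_s8 R₂ᵀ hR₂o' s₂₁₃ _ rfl
  have ha : a₁₂ = m * n := by rw [ha₁₂, hnb123, hnb213]
  -- s₂₁₃ in terms of s₁₂₃
  have hst : s₂₁₃ = (-(m / n)) • s₁₂₃ := by
    have h3 : s₂₁₃ = m • (m⁻¹ • s₂₁₃) := by
      rw [smul_smul, mul_inv_cancel₀ hm, one_smul]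
    rw [hnormal] at h3
    rw [h3, smul_neg, smul_smul, neg_smul, div_eq_mul_inv]
  -- s₂₁ in terms of s₁₂
  have hs21 : s₂₁ = -s₁₂ := by rw [hopp, neg_neg]
  -- abbreviations for the two quadratic forms
  set E := dot3 (matVec R₂ᵀ s₁₂) (matVec Qd₁₂ (matVec R₁ᵀ s₁₂)) with hE
  set D := dot3 (matVec R₂ᵀ s₁₂₃) (matVec Qd₁₂ (matVec R₁ᵀ s₁₂₃)) with hD
  -- Ψ in terms of E, D
  have hdot1 : dot3 b₂₁ (matVec Qd₁₂ b₁₂) = -E := by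
    rw [hb₂₁, hb₁₂, hs21]
    show dot3 (matVec R₂ᵀ (-s₁₂)) (matVec Qd₁₂ (matVec R₁ᵀ s₁₂)) = -E
    rw [matVec_neg, dot3_neg_left]
  have hdot2 : dot3 b₂₁₃ (matVec Qd₁₂ b₁₂₃) = -(m / n) * D := by
    rw [hb213, hb123, hst]
    show dot3 (matVec R₂ᵀ ((-(m / n)) • s₁₂₃)) (matVec Qd₁₂ (matVec R₁ᵀ s₁₂₃))
        = -(m / n) * D
    rw [matVec_smul, dot3_smul_left]
  -- trace computation
  have htr : Matrix.trace (R₂ᵀ * K * R₁ * Qd₂₁) = kα * E + (kβ / n ^ 2) * D := by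
    rw [hQd₂₁, hK]
    rw [Matrix.mul_add, Matrix.add_mul, Matrix.add_mul, Matrix.trace_add]
    rw [Matrix.mul_smul, Matrix.smul_mul, Matrix.smul_mul,
      Matrix.mul_smul, Matrix.smul_mul, Matrix.smul_mul,
      Matrix.trace_smul, Matrix.trace_smul]
    rw [trace_rank_one R₂ R₁ Qd₁₂ s₁₂, trace_rank_one R₂ R₁ Qd₁₂ s₁₂₃]
    simp only [smul_eq_mul, ← hE, ← hD]
  rw [hΨ, hdot1, hdot2, ha, htr]
  field_simp
  ring
end
end

section
/- Let f₁, f₂, f₃ ≥ 0, not all zero, F = diag(f₁, f₂, f₃), and P ∈ SO(3). Define Φ = (1/2) tr[F(I − P)] and e_P = (1/2)(FP − PᵀF)^∨, and let h₁ = min{f₁+f₂, f₂+f₃, f₃+f₁}, h₂ = max{(f₁−f₂)², (f₂−f₃)², (f₃−f₁)²}, h₃ = max{(f₁+f₂)², (f₂+f₃)², (f₃+f₁)²}. Then Φ ≥ (h₁/(h₂+h₃)) ‖e_P‖². -/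
noncomputable section
open Matrix

attribute [local instance] Matrix.normedAddCommGroup Matrix.normedSpace

set_option maxHeartbeats 1000000


lemma amgm (c X Y : ℝ) (hX : 0 ≤ X) (hY : 0 ≤ Y) (h : c^2 = 4*X*Y) : c ≤ X + Y := by
  nlinarith [sq_nonneg (X - Y), sq_nonneg (X + Y - c)]

lemma comp_bound (a b u0 u1 u2 u3 A M e : ℝ)
    (h0 : 0 ≤ u0) (h1 : 0 ≤ u1) (h2 : 0 ≤ u2) (h3 : 0 ≤ u3)
    (hsum : u0 + u1 + u2 + u3 = 1)
    (hA : A^2 = 16*u0*u1) (hM : M^2 = 16*u2*u3)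
    (he : e = ((a*A+b*M)/4)^2) :
    (u1+u2+u3) * e ≤ a^2*u1*(u1+u2+u3) + b^2*(u2*u3) := by
  have hru : u0 = 1 - (u1+u2+u3) := by linarith
  have hc : (u1+u2+u3)*(a*b*(A*M))/8
      ≤ a^2*u1*(u1+u2+u3)^2 + b^2*((1-(u1+u2+u3))*(u2*u3)) := by
    rw [← hru]
    apply amgm
    · positivity
    · positivity
    · have : ((u1+u2+u3)*(a*b*(A*M))/8)^2 = (u1+u2+u3)^2*a^2*b^2*(A^2*M^2)/64 := by ring
      rw [this, hA, hM]; ring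
  have expand : (u1+u2+u3) * e
      = (u1+u2+u3)*a^2*((1-(u1+u2+u3))*u1) + (u1+u2+u3)*b^2*(u2*u3)
        + (u1+u2+u3)*(a*b*(A*M))/8 := by
    rw [he, ← hru]
    linear_combination ((u1+u2+u3)*a^2/16)*hA + ((u1+u2+u3)*b^2/16)*hM
  rw [expand]
  linarith [hc]

lemma unonneg (u0 u1 u2 u3 A M1 M2 : ℝ) (hsum : u0 + u1 + u2 + u3 = 1)
    (hA : A^2 = 16*u0*u1) (hM1 : M1^2 = 16*u1*u3) (hM2 : M2^2 = 16*u1*u2) :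
    0 ≤ u1 := by
  have key : u1 = u1*u0 + u1^2 + u1*u2 + u1*u3 := by linear_combination (-u1) * hsum
  linarith [sq_nonneg A, sq_nonneg M1, sq_nonneg M2, sq_nonneg u1, hA, hM1, hM2, key]

lemma aux_main (a0 a1 a2 b0 b1 b2 h1 h2 h3 u0 u1 u2 u3 A0 A1 A2 M0 M1 M2 E Φ : ℝ)
    (hsum : u0 + u1 + u2 + u3 = 1)
    (hA0 : A0^2 = 16*u0*u1) (hA1 : A1^2 = 16*u0*u2) (hA2 : A2^2 = 16*u0*u3)
    (hM0 : M0^2 = 16*u2*u3) (hM1 : M1^2 = 16*u1*u3) (hM2 : M2^2 = 16*u1*u2)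
    (ha0 : h1 ≤ a0) (ha1 : h1 ≤ a1) (ha2 : h1 ≤ a2)
    (ha0' : a0^2 ≤ h3) (ha1' : a1^2 ≤ h3) (ha2' : a2^2 ≤ h3)
    (hb0 : b0^2 ≤ h2) (hb1 : b1^2 ≤ h2) (hb2 : b2^2 ≤ h2)
    (hh1 : 0 ≤ h1) (hh2 : 0 ≤ h2) (hh3 : 0 ≤ h3)
    (hE : E = ((a0*A0+b0*M0)/4)^2 + ((a1*A1+b1*M1)/4)^2 + ((a2*A2+b2*M2)/4)^2)
    (hΦ : Φ = a0*u1 + a1*u2 + a2*u3) :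
    h1 * E ≤ (h2 + h3) * Φ := by
  have hu1 : 0 ≤ u1 := unonneg u0 u1 u2 u3 A0 M1 M2 hsum hA0 hM1 hM2
  have hu2 : 0 ≤ u2 := by
    apply unonneg u0 u2 u3 u1 A1 M2 M0 (by linarith) hA1
    · linarith [hM2]
    · linarith [hM0]
  have hu3 : 0 ≤ u3 := by
    apply unonneg u0 u3 u1 u2 A2 M0 M1 (by linarith) hA2
    · linarith [hM0]
    · linarith [hM1]
  have hu0 : 0 ≤ u0 := by
    apply unonneg u1 u0 u2 u3 A0 A2 A1 (by linarith)
    · linarith [hA0]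
    · linarith [hA2]
    · linarith [hA1]
  obtain ⟨E0, hE0⟩ : ∃ x : ℝ, x = ((a0*A0+b0*M0)/4)^2 := ⟨_, rfl⟩
  obtain ⟨E1, hE1⟩ : ∃ x : ℝ, x = ((a1*A1+b1*M1)/4)^2 := ⟨_, rfl⟩
  obtain ⟨E2, hE2⟩ : ∃ x : ℝ, x = ((a2*A2+b2*M2)/4)^2 := ⟨_, rfl⟩
  have hE0n : 0 ≤ E0 := by rw [hE0]; positivity
  have hE1n : 0 ≤ E1 := by rw [hE1]; positivity
  have hE2n : 0 ≤ E2 := by rw [hE2]; positivity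
  have hEsum : E = E0 + E1 + E2 := by rw [hE, hE0, hE1, hE2]
  have c0 := comp_bound a0 b0 u0 u1 u2 u3 A0 M0 E0 hu0 hu1 hu2 hu3 hsum hA0 hM0 hE0
  have c1 : (u2+u3+u1) * E1 ≤ a1^2*u2*(u2+u3+u1) + b1^2*(u3*u1) :=
    comp_bound a1 b1 u0 u2 u3 u1 A1 M1 E1 hu0 hu2 hu3 hu1 (by linarith) hA1 (by linarith [hM1]) hE1
  have c2 : (u3+u1+u2) * E2 ≤ a2^2*u3*(u3+u1+u2) + b2^2*(u1*u2) :=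
    comp_bound a2 b2 u0 u3 u1 u2 A2 M2 E2 hu0 hu3 hu1 hu2 (by linarith) hA2 (by linarith [hM2]) hE2
  have s1 : a0^2*u1*(u1+u2+u3) + a1^2*u2*(u2+u3+u1) + a2^2*u3*(u3+u1+u2)
      ≤ h3 * (u1+u2+u3)^2 := by
    have e1 : a0^2*(u1*(u1+u2+u3)) ≤ h3*(u1*(u1+u2+u3)) :=
      mul_le_mul_of_nonneg_right ha0' (by positivity)
    have e2 : a1^2*(u2*(u1+u2+u3)) ≤ h3*(u2*(u1+u2+u3)) :=
      mul_le_mul_of_nonneg_right ha1' (by positivity)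
    have e3 : a2^2*(u3*(u1+u2+u3)) ≤ h3*(u3*(u1+u2+u3)) :=
      mul_le_mul_of_nonneg_right ha2' (by positivity)
    linarith [e1, e2, e3]
  have s2 : b0^2*(u2*u3) + b1^2*(u3*u1) + b2^2*(u1*u2) ≤ h2 * (u1+u2+u3)^2 := by
    have e1 : b0^2*(u2*u3) ≤ h2*(u2*u3) := mul_le_mul_of_nonneg_right hb0 (by positivity)
    have e2 : b1^2*(u3*u1) ≤ h2*(u3*u1) := mul_le_mul_of_nonneg_right hb1 (by positivity)
    have e3 : b2^2*(u1*u2) ≤ h2*(u1*u2) := mul_le_mul_of_nonneg_right hb2 (by positivity)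
    have hm : u2*u3 + u3*u1 + u1*u2 ≤ (u1+u2+u3)^2 := by
      linarith [sq_nonneg u1, sq_nonneg u2, sq_nonneg u3,
        mul_nonneg hu1 hu2, mul_nonneg hu2 hu3, mul_nonneg hu3 hu1]
    have hm2 := mul_le_mul_of_nonneg_left hm hh2
    linarith [e1, e2, e3, hm2]
  have hrE : (u1+u2+u3) * (E0+E1+E2) ≤ (h2 + h3) * (u1+u2+u3)^2 := by
    linarith [c0, c1, c2, s1, s2]
  rcases eq_or_lt_of_le (by positivity : (0:ℝ) ≤ u1+u2+u3) with hre | hrp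
  · have h1' : u1 = 0 := by linarith
    have h2' : u2 = 0 := by linarith
    have h3' : u3 = 0 := by linarith
    have z : ∀ x : ℝ, x^2 = 0 → x = 0 := fun x hx => by
      exact pow_eq_zero_iff (n := 2) (by norm_num) |>.mp hx
    have hA0' : A0 = 0 := z _ (by rw [hA0, h1']; ring)
    have hA1' : A1 = 0 := z _ (by rw [hA1, h2']; ring)
    have hA2' : A2 = 0 := z _ (by rw [hA2, h3']; ring)
    have hM0' : M0 = 0 := z _ (by rw [hM0, h2']; ring)
    have hM1' : M1 = 0 := z _ (by rw [hM1, h1']; ring)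
    have hM2' : M2 = 0 := z _ (by rw [hM2, h1']; ring)
    have hE' : E = 0 := by rw [hE, hA0', hA1', hA2', hM0', hM1', hM2']; ring
    have hΦ' : Φ = 0 := by rw [hΦ, h1', h2', h3']; ring
    rw [hE', hΦ']; simp
  · have hEr : E ≤ (h2 + h3) * (u1+u2+u3) := by
      rw [hEsum]
      have := (mul_le_mul_iff_right₀ hrp).mp
        (by linarith [hrE] : (u1+u2+u3) * (E0+E1+E2) ≤ (u1+u2+u3) * ((h2+h3)*(u1+u2+u3)))
      linarith [this]
    have hΦr : h1 * (u1+u2+u3) ≤ Φ := by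
      rw [hΦ]
      linarith [mul_le_mul_of_nonneg_right ha0 hu1, mul_le_mul_of_nonneg_right ha1 hu2,
        mul_le_mul_of_nonneg_right ha2 hu3]
    calc h1 * E ≤ h1 * ((h2+h3)*(u1+u2+u3)) := mul_le_mul_of_nonneg_left hEr hh1
      _ = (h2+h3) * (h1*(u1+u2+u3)) := by ring
      _ ≤ (h2+h3) * Φ := mul_le_mul_of_nonneg_left hΦr (by linarith)

/-- lower quadratic bound of the error function Φ on SO(3). -/
theorem Phi_lower_bound
    (f₁ f₂ f₃ : ℝ) (hf₁ : 0 ≤ f₁) (hf₂ : 0 ≤ f₂) (hf₃ : 0 ≤ f₃)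
    (hne : ¬(f₁ = 0 ∧ f₂ = 0 ∧ f₃ = 0))
    (F : M3) (hF : F = Matrix.diagonal ![f₁, f₂, f₃])
    (P : M3) (hP : SO3 P)
    (Φ : ℝ) (hΦ : Φ = (1 / 2) * Matrix.trace (F * (1 - P)))
    (eP : V3) (heP : eP = (1 / 2 : ℝ) • vee (F * P - Pᵀ * F))
    (h₁ h₂ h₃ : ℝ)
    (hh₁ : h₁ = min (f₁ + f₂) (min (f₂ + f₃) (f₃ + f₁)))
    (hh₂ : h₂ = max ((f₁ - f₂) ^ 2) (max ((f₂ - f₃) ^ 2) ((f₃ - f₁) ^ 2)))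
    (hh₃ : h₃ = max ((f₁ + f₂) ^ 2) (max ((f₂ + f₃) ^ 2) ((f₃ + f₁) ^ 2))) :
    (h₁ / (h₂ + h₃)) * ‖eP‖ ^ 2 ≤ Φ := by
  obtain ⟨hPo, hPd⟩ := hP
  have hPPt : P * Pᵀ = 1 := mul_eq_one_comm.mp hPo
  -- column norms
  have c0 : P 0 0 ^2 + P 1 0 ^2 + P 2 0 ^2 = 1 := by
    have hc := congrFun (congrFun hPo 0) 0
    simp [Matrix.mul_apply, Fin.sum_univ_three] at hc
    nlinarith [hc]
  have c1 : P 0 1 ^2 + P 1 1 ^2 + P 2 1 ^2 = 1 := by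
    have hc := congrFun (congrFun hPo 1) 1
    simp [Matrix.mul_apply, Fin.sum_univ_three] at hc
    nlinarith [hc]
  have c2 : P 0 2 ^2 + P 1 2 ^2 + P 2 2 ^2 = 1 := by
    have hc := congrFun (congrFun hPo 2) 2
    simp [Matrix.mul_apply, Fin.sum_univ_three] at hc
    nlinarith [hc]
  -- row norms
  have r0 : P 0 0 ^2 + P 0 1 ^2 + P 0 2 ^2 = 1 := by
    have hc := congrFun (congrFun hPPt 0) 0
    simp [Matrix.mul_apply, Fin.sum_univ_three] at hc
    nlinarith [hc]
  have r1 : P 1 0 ^2 + P 1 1 ^2 + P 1 2 ^2 = 1 := by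
    have hc := congrFun (congrFun hPPt 1) 1
    simp [Matrix.mul_apply, Fin.sum_univ_three] at hc
    nlinarith [hc]
  have r2 : P 2 0 ^2 + P 2 1 ^2 + P 2 2 ^2 = 1 := by
    have hc := congrFun (congrFun hPPt 2) 2
    simp [Matrix.mul_apply, Fin.sum_univ_three] at hc
    nlinarith [hc]
  -- cofactor identities from the adjugate
  have hadj : P.adjugate = Pᵀ := by
    have h2 : P * P.adjugate = 1 := by rw [Matrix.mul_adjugate, hPd, one_smul]
    calc P.adjugate = 1 * P.adjugate := (one_mul _).symm
      _ = (Pᵀ * P) * P.adjugate := by rw [hPo]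
      _ = Pᵀ * (P * P.adjugate) := by rw [Matrix.mul_assoc]
      _ = Pᵀ := by rw [h2, Matrix.mul_one]
  rw [Matrix.adjugate_fin_three] at hadj
  have k0 : P 1 1 * P 2 2 - P 1 2 * P 2 1 = P 0 0 := by
    have := congrFun (congrFun hadj 0) 0; simp at this; linarith
  have k1 : P 0 0 * P 2 2 - P 0 2 * P 2 0 = P 1 1 := by
    have := congrFun (congrFun hadj 1) 1; simp at this; linarith
  have k2 : P 0 0 * P 1 1 - P 0 1 * P 1 0 = P 2 2 := by
    have := congrFun (congrFun hadj 2) 2; simp at this; linarith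
  -- the quaternion-square quantities
  set u0 : ℝ := (1 + P 0 0 + P 1 1 + P 2 2)/4 with hu0d
  set u1 : ℝ := (1 + P 0 0 - P 1 1 - P 2 2)/4 with hu1d
  set u2 : ℝ := (1 - P 0 0 + P 1 1 - P 2 2)/4 with hu2d
  set u3 : ℝ := (1 - P 0 0 - P 1 1 + P 2 2)/4 with hu3d
  set A0 : ℝ := P 2 1 - P 1 2 with hA0d
  set A1 : ℝ := P 0 2 - P 2 0 with hA1d
  set A2 : ℝ := P 1 0 - P 0 1 with hA2d
  set M0 : ℝ := P 2 1 + P 1 2 with hM0d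
  set M1 : ℝ := P 0 2 + P 2 0 with hM1d
  set M2 : ℝ := P 1 0 + P 0 1 with hM2d
  have hsum : u0 + u1 + u2 + u3 = 1 := by rw [hu0d, hu1d, hu2d, hu3d]; ring
  have hA0 : A0^2 = 16*u0*u1 := by
    rw [hA0d, hu0d, hu1d]; linear_combination 2*k0 + r1 + r2 - c0
  have hA1 : A1^2 = 16*u0*u2 := by
    rw [hA1d, hu0d, hu2d]; linear_combination 2*k1 + r0 + r2 - c1
  have hA2 : A2^2 = 16*u0*u3 := by
    rw [hA2d, hu0d, hu3d]; linear_combination 2*k2 + r0 + r1 - c2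
  have hM0 : M0^2 = 16*u2*u3 := by
    rw [hM0d, hu2d, hu3d]; linear_combination -2*k0 + r1 + r2 - c0
  have hM1 : M1^2 = 16*u1*u3 := by
    rw [hM1d, hu1d, hu3d]; linear_combination -2*k1 + r0 + r2 - c1
  have hM2 : M2^2 = 16*u1*u2 := by
    rw [hM2d, hu1d, hu2d]; linear_combination -2*k2 + r0 + r1 - c2
  -- Φ and eP in scalar form
  have hΦ' : Φ = (f₂+f₃)*u1 + (f₃+f₁)*u2 + (f₁+f₂)*u3 := by
    subst hF
    rw [hΦ, Matrix.trace_fin_three]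
    simp [Matrix.mul_apply, Fin.sum_univ_three, Matrix.diagonal, Matrix.one_apply]
    rw [hu1d, hu2d, hu3d]; ring
  have he0 : eP 0 = ((f₂+f₃)*A0 + (f₃-f₂)*M0)/4 := by
    subst hF heP
    simp [vee, Matrix.mul_apply, Fin.sum_univ_three, Matrix.diagonal]
    rw [hA0d, hM0d]; ring
  have he1 : eP 1 = ((f₃+f₁)*A1 + (f₁-f₃)*M1)/4 := by
    subst hF heP
    simp [vee, Matrix.mul_apply, Fin.sum_univ_three, Matrix.diagonal]
    rw [hA1d, hM1d]; ring
  have he2 : eP 2 = ((f₁+f₂)*A2 + (f₂-f₁)*M2)/4 := by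
    subst hF heP
    simp [vee, Matrix.mul_apply, Fin.sum_univ_three, Matrix.diagonal]
    rw [hA2d, hM2d]; ring
  have hnorm : ‖eP‖^2 = (((f₂+f₃)*A0 + (f₃-f₂)*M0)/4)^2
      + (((f₃+f₁)*A1 + (f₁-f₃)*M1)/4)^2 + (((f₁+f₂)*A2 + (f₂-f₁)*M2)/4)^2 := by
    rw [EuclideanSpace.norm_eq, Real.sq_sqrt (by positivity)]
    simp only [Fin.sum_univ_three, Real.norm_eq_abs, sq_abs]
    rw [he0, he1, he2]
  -- bounds on the h's
  have ha0 : h₁ ≤ f₂+f₃ := by rw [hh₁]; exact le_trans (min_le_right _ _) (min_le_left _ _)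
  have ha1 : h₁ ≤ f₃+f₁ := by rw [hh₁]; exact le_trans (min_le_right _ _) (min_le_right _ _)
  have ha2 : h₁ ≤ f₁+f₂ := by rw [hh₁]; exact min_le_left _ _
  have ha0' : (f₂+f₃)^2 ≤ h₃ := by rw [hh₃]; exact le_trans (le_max_left _ _) (le_max_right _ _)
  have ha1' : (f₃+f₁)^2 ≤ h₃ := by rw [hh₃]; exact le_trans (le_max_right _ _) (le_max_right _ _)
  have ha2' : (f₁+f₂)^2 ≤ h₃ := by rw [hh₃]; exact le_max_left _ _
  have hb0 : (f₃-f₂)^2 ≤ h₂ := by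
    rw [hh₃] at *; rw [hh₂, show (f₃-f₂)^2 = (f₂-f₃)^2 by ring]
    exact le_trans (le_max_left _ _) (le_max_right _ _)
  have hb1 : (f₁-f₃)^2 ≤ h₂ := by
    rw [hh₂, show (f₁-f₃)^2 = (f₃-f₁)^2 by ring]
    exact le_trans (le_max_right _ _) (le_max_right _ _)
  have hb2 : (f₂-f₁)^2 ≤ h₂ := by
    rw [hh₂, show (f₂-f₁)^2 = (f₁-f₂)^2 by ring]
    exact le_max_left _ _
  have hh1 : 0 ≤ h₁ := by rw [hh₁]; positivity
  have hh2 : 0 ≤ h₂ := le_trans (sq_nonneg (f₃-f₂)) hb0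
  have hh3 : 0 ≤ h₃ := le_trans (sq_nonneg (f₂+f₃)) ha0'
  have hpos : 0 < h₂ + h₃ := by
    have hf : f₁ ≠ 0 ∨ f₂ ≠ 0 ∨ f₃ ≠ 0 := by tauto
    have : 0 < h₃ := by
      rcases hf with h | h | h
      · exact lt_of_lt_of_le (by positivity : (0:ℝ) < (f₁+f₂)^2) ha2'
      · exact lt_of_lt_of_le (by positivity : (0:ℝ) < (f₂+f₃)^2) ha0'
      · exact lt_of_lt_of_le (by positivity : (0:ℝ) < (f₃+f₁)^2) ha1'
    linarith
  have key := aux_main (f₂+f₃) (f₃+f₁) (f₁+f₂) (f₃-f₂) (f₁-f₃) (f₂-f₁) h₁ h₂ h₃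
    u0 u1 u2 u3 A0 A1 A2 M0 M1 M2 (‖eP‖^2) Φ hsum hA0 hA1 hA2 hM0 hM1 hM2
    ha0 ha1 ha2 ha0' ha1' ha2' hb0 hb1 hb2 hh1 hh2 hh3 hnorm hΦ'
  rw [div_mul_eq_mul_div, div_le_iff₀ hpos]
  linarith [key]
end
end

section
/- Let f₁, f₂, f₃ ≥ 0, F = diag(f₁, f₂, f₃), and P ∈ SO(3). Define Φ = (1/2) tr[F(I − P)] and e_P = (1/2)(FP − PᵀF)^∨, and let h₁ = min{f₁+f₂, f₂+f₃, f₃+f₁}, h₄ = max{f₁+f₂, f₂+f₃, f₃+f₁}, h₅ = min{(f₁+f₂)², (f₂+f₃)², (f₃+f₁)²}. If h₁ > 0 and Φ ≤ φ for a constant φ < h₁, then Φ ≤ (h₁h₄/(h₅(h₁ − φ))) ‖e_P‖². -/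
noncomputable section
open Matrix

attribute [local instance] Matrix.normedAddCommGroup Matrix.normedSpace


/-- Scalar core of the bound: everything expressed in matrix entries. -/

private lemma nonneg_of_pairwise (w0 w1 w2 w3 : ℝ)
    (h01 : 0 ≤ w0 * w1) (h02 : 0 ≤ w0 * w2) (h03 : 0 ≤ w0 * w3)
    (h23 : 0 ≤ w2 * w3) (h31 : 0 ≤ w3 * w1) (h12 : 0 ≤ w1 * w2)
    (hsum : w0 + w1 + w2 + w3 = 1) :
    0 ≤ w0 ∧ 0 ≤ w1 ∧ 0 ≤ w2 ∧ 0 ≤ w3 := by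
  have key : ∀ x y z t : ℝ, 0 ≤ x*y → 0 ≤ x*z → 0 ≤ x*t → x+y+z+t = 1 → 0 ≤ x := by
    intro x y z t hxy hxz hxt hs
    by_contra hx
    push_neg at hx
    have hy : y ≤ 0 := by
      by_contra h; push_neg at h
      exact absurd hxy (not_le.2 (mul_neg_of_neg_of_pos hx h))
    have hz : z ≤ 0 := by
      by_contra h; push_neg at h
      exact absurd hxz (not_le.2 (mul_neg_of_neg_of_pos hx h))
    have ht : t ≤ 0 := by
      by_contra h; push_neg at h
      exact absurd hxt (not_le.2 (mul_neg_of_neg_of_pos hx h))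
    linarith
  refine ⟨key w0 w1 w2 w3 h01 h02 h03 hsum,
    key w1 w0 w2 w3 (by linarith [h01, mul_comm w0 w1]) h12 (by linarith [h31, mul_comm w3 w1]) (by linarith),
    key w2 w0 w1 w3 (by linarith [h02, mul_comm w0 w2]) (by linarith [h12, mul_comm w1 w2]) h23 (by linarith),
    key w3 w0 w1 w2 (by linarith [h03, mul_comm w0 w3]) h31 (by linarith [h23, mul_comm w2 w3]) (by linarith)⟩

set_option maxHeartbeats 1000000 in
private lemma Phi_upper_aux
    (f₁ f₂ f₃ : ℝ)
    (p00 p01 p02 p10 p11 p12 p20 p21 p22 : ℝ)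
    (hR0 : p00^2 + p01^2 + p02^2 = 1)
    (hR1 : p10^2 + p11^2 + p12^2 = 1)
    (hR2 : p20^2 + p21^2 + p22^2 = 1)
    (hC0 : p00^2 + p10^2 + p20^2 = 1)
    (hC1 : p01^2 + p11^2 + p21^2 = 1)
    (hC2 : p02^2 + p12^2 + p22^2 = 1)
    (hK0 : p11 * p22 - p12 * p21 = p00)
    (hK1 : p00 * p22 - p02 * p20 = p11)
    (hK2 : p00 * p11 - p01 * p10 = p22)
    (Φ : ℝ) (hΦ : Φ = (f₁ * (1 - p00) + f₂ * (1 - p11) + f₃ * (1 - p22)) / 2)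
    (E : ℝ)
    (hE : E = ((f₃ * p21 - f₂ * p12) / 2)^2 + ((f₁ * p02 - f₃ * p20) / 2)^2
        + ((f₂ * p10 - f₁ * p01) / 2)^2)
    (h₁ h₄ h₅ : ℝ)
    (hh₁ : h₁ = min (f₁ + f₂) (min (f₂ + f₃) (f₃ + f₁)))
    (hh₄ : h₄ = max (f₁ + f₂) (max (f₂ + f₃) (f₃ + f₁)))
    (hh₅ : h₅ = min ((f₁ + f₂) ^ 2) (min ((f₂ + f₃) ^ 2) ((f₃ + f₁) ^ 2)))
    (hh₁pos : 0 < h₁)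
    (φ : ℝ) (hφ : φ < h₁) (hΦφ : Φ ≤ φ) :
    Φ * (h₅ * (h₁ - φ)) ≤ h₁ * h₄ * E := by
  -- quaternion-square quantities
  have hI1 : ((p21 - p12)/4)^2 = ((1+p00+p11+p22)/4) * ((1+p00-p11-p22)/4) := by
    linear_combination (1/8)*hK0 + (1/16)*hR1 + (1/16)*hR2 - (1/16)*hC0
  have hI2 : ((p02 - p20)/4)^2 = ((1+p00+p11+p22)/4) * ((1-p00+p11-p22)/4) := by
    linear_combination (1/8)*hK1 + (1/16)*hR2 + (1/16)*hR0 - (1/16)*hC1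
  have hI3 : ((p10 - p01)/4)^2 = ((1+p00+p11+p22)/4) * ((1-p00-p11+p22)/4) := by
    linear_combination (1/8)*hK2 + (1/16)*hR0 + (1/16)*hR1 - (1/16)*hC2
  have hI4 : ((p21 + p12)/4)^2 = ((1-p00+p11-p22)/4) * ((1-p00-p11+p22)/4) := by
    linear_combination (-1/8)*hK0 + (1/16)*hR1 + (1/16)*hR2 - (1/16)*hC0
  have hI5 : ((p02 + p20)/4)^2 = ((1-p00-p11+p22)/4) * ((1+p00-p11-p22)/4) := by
    linear_combination (-1/8)*hK1 + (1/16)*hR2 + (1/16)*hR0 - (1/16)*hC1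
  have hI6 : ((p10 + p01)/4)^2 = ((1+p00-p11-p22)/4) * ((1-p00+p11-p22)/4) := by
    linear_combination (-1/8)*hK2 + (1/16)*hR0 + (1/16)*hR1 - (1/16)*hC2
  have hX12 : ((p21 - p12)/4) * ((p21 + p12)/4) = ((p02 - p20)/4) * ((p02 + p20)/4) := by
    linear_combination (1/16)*hR2 - (1/16)*hC2
  have hX13 : ((p21 - p12)/4) * ((p21 + p12)/4) = ((p10 - p01)/4) * ((p10 + p01)/4) := by
    linear_combination (1/16)*hC1 - (1/16)*hR1
  obtain ⟨a1, ha1⟩ : ∃ x : ℝ, x = (p21 - p12)/4 := ⟨_, rfl⟩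
  obtain ⟨a2, ha2⟩ : ∃ x : ℝ, x = (p02 - p20)/4 := ⟨_, rfl⟩
  obtain ⟨a3, ha3⟩ : ∃ x : ℝ, x = (p10 - p01)/4 := ⟨_, rfl⟩
  obtain ⟨b1, hb1⟩ : ∃ x : ℝ, x = (p21 + p12)/4 := ⟨_, rfl⟩
  obtain ⟨b2, hb2⟩ : ∃ x : ℝ, x = (p02 + p20)/4 := ⟨_, rfl⟩
  obtain ⟨b3, hb3⟩ : ∃ x : ℝ, x = (p10 + p01)/4 := ⟨_, rfl⟩
  obtain ⟨w0, hw0⟩ : ∃ x : ℝ, x = (1+p00+p11+p22)/4 := ⟨_, rfl⟩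
  obtain ⟨w1, hw1⟩ : ∃ x : ℝ, x = (1+p00-p11-p22)/4 := ⟨_, rfl⟩
  obtain ⟨w2, hw2⟩ : ∃ x : ℝ, x = (1-p00+p11-p22)/4 := ⟨_, rfl⟩
  obtain ⟨w3, hw3⟩ : ∃ x : ℝ, x = (1-p00-p11+p22)/4 := ⟨_, rfl⟩
  rw [← ha1, ← hw0, ← hw1] at hI1
  rw [← ha2, ← hw0, ← hw2] at hI2
  rw [← ha3, ← hw0, ← hw3] at hI3
  rw [← hb1, ← hw2, ← hw3] at hI4
  rw [← hb2, ← hw3, ← hw1] at hI5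
  rw [← hb3, ← hw1, ← hw2] at hI6
  rw [← ha1, ← hb1, ← ha2, ← hb2] at hX12
  rw [← ha1, ← hb1, ← ha3, ← hb3] at hX13
  have hsum : w0 + w1 + w2 + w3 = 1 := by rw [hw0, hw1, hw2, hw3]; ring
  have hq01 : 0 ≤ w0 * w1 := hI1 ▸ sq_nonneg a1
  have hq02 : 0 ≤ w0 * w2 := hI2 ▸ sq_nonneg a2
  have hq03 : 0 ≤ w0 * w3 := hI3 ▸ sq_nonneg a3
  have hq23 : 0 ≤ w2 * w3 := hI4 ▸ sq_nonneg b1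
  have hq31 : 0 ≤ w3 * w1 := hI5 ▸ sq_nonneg b2
  have hq12 : 0 ≤ w1 * w2 := hI6 ▸ sq_nonneg b3
  obtain ⟨hw0n, hw1n, hw2n, hw3n⟩ :=
    nonneg_of_pairwise w0 w1 w2 w3 hq01 hq02 hq03 hq23 hq31 hq12 hsum
  -- bounds on the coefficients
  have hc3l : h₁ ≤ f₁ + f₂ := hh₁ ▸ min_le_left _ _
  have hc1l : h₁ ≤ f₂ + f₃ := hh₁ ▸ le_trans (min_le_right _ _) (min_le_left _ _)
  have hc2l : h₁ ≤ f₃ + f₁ := hh₁ ▸ le_trans (min_le_right _ _) (min_le_right _ _)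
  have hc3u : f₁ + f₂ ≤ h₄ := hh₄ ▸ le_max_left _ _
  have hc1u : f₂ + f₃ ≤ h₄ := hh₄ ▸ le_trans (le_max_left _ _) (le_max_right _ _)
  have hc2u : f₃ + f₁ ≤ h₄ := hh₄ ▸ le_trans (le_max_right _ _) (le_max_right _ _)
  have hs3 : h₅ ≤ (f₁ + f₂)^2 := hh₅ ▸ min_le_left _ _
  have hs1 : h₅ ≤ (f₂ + f₃)^2 := hh₅ ▸ le_trans (min_le_right _ _) (min_le_left _ _)
  have hs2 : h₅ ≤ (f₃ + f₁)^2 := hh₅ ▸ le_trans (min_le_right _ _) (min_le_right _ _)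
  have h₅n : 0 ≤ h₅ := by
    rw [hh₅]; positivity
  -- Φ in terms of w's
  have hΦeq : Φ = (f₂ + f₃) * w1 + (f₃ + f₁) * w2 + (f₁ + f₂) * w3 := by
    rw [hΦ, hw1, hw2, hw3]; ring
  obtain ⟨S, hS⟩ : ∃ x : ℝ, x = w1 + w2 + w3 := ⟨_, rfl⟩
  have hSn : 0 ≤ S := by rw [hS]; linarith
  have eS4 : h₄ * S = h₄ * w1 + h₄ * w2 + h₄ * w3 := by rw [hS]; ring
  have eS1 : h₁ * S = h₁ * w1 + h₁ * w2 + h₁ * w3 := by rw [hS]; ring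
  have hΦ4 : Φ ≤ h₄ * S := by
    have t1 := mul_le_mul_of_nonneg_right hc1u hw1n
    have t2 := mul_le_mul_of_nonneg_right hc2u hw2n
    have t3 := mul_le_mul_of_nonneg_right hc3u hw3n
    linarith [hΦeq, eS4]
  have hΦ1 : h₁ * S ≤ Φ := by
    have t1 := mul_le_mul_of_nonneg_right hc1l hw1n
    have t2 := mul_le_mul_of_nonneg_right hc2l hw2n
    have t3 := mul_le_mul_of_nonneg_right hc3l hw3n
    linarith [hΦeq, eS1]
  -- E in terms of a's and b's, cross terms cancel
  have hEsq : E = (f₂+f₃)^2 * a1^2 + (f₃+f₁)^2 * a2^2 + (f₁+f₂)^2 * a3^2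
      + (f₃-f₂)^2 * b1^2 + (f₁-f₃)^2 * b2^2 + (f₂-f₁)^2 * b3^2 := by
    have hE' : E = ((f₂+f₃)*a1 + (f₃-f₂)*b1)^2 + ((f₃+f₁)*a2 + (f₁-f₃)*b2)^2
        + ((f₁+f₂)*a3 + (f₂-f₁)*b3)^2 := by
      rw [hE, ha1, ha2, ha3, hb1, hb2, hb3]; ring
    rw [hE']
    linear_combination (2*(f₃^2 - f₁^2))*hX12 + (2*(f₁^2 - f₂^2))*hX13
  have hEb : h₅ * (w0 * S) ≤ E := by
    have haa : h₅ * (w0 * S) = h₅ * a1^2 + h₅ * a2^2 + h₅ * a3^2 := by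
      rw [hS]; linear_combination (-h₅) * hI1 - h₅ * hI2 - h₅ * hI3
    have t1 := mul_le_mul_of_nonneg_right hs1 (sq_nonneg a1)
    have t2 := mul_le_mul_of_nonneg_right hs2 (sq_nonneg a2)
    have t3 := mul_le_mul_of_nonneg_right hs3 (sq_nonneg a3)
    have u1 : (0:ℝ) ≤ (f₃-f₂)^2 * b1^2 := mul_nonneg (sq_nonneg _) (sq_nonneg _)
    have u2 : (0:ℝ) ≤ (f₁-f₃)^2 * b2^2 := mul_nonneg (sq_nonneg _) (sq_nonneg _)
    have u3 : (0:ℝ) ≤ (f₂-f₁)^2 * b3^2 := mul_nonneg (sq_nonneg _) (sq_nonneg _)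
    linarith [hEsq, haa]
  -- assemble
  have hΦn : 0 ≤ Φ := le_trans (mul_nonneg hh₁pos.le hSn) hΦ1
  have hup : h₁ - Φ ≤ h₁ * w0 := by
    have h' : h₁ * w0 = h₁ - h₁ * S := by
      rw [hS]; linear_combination h₁ * hsum
    linarith [hΦ1, h'.ge]
  have h₄n : 0 ≤ h₄ := le_trans (le_trans hh₁pos.le hc3l) hc3u
  have t1 : Φ * (h₁ - φ) ≤ (h₄ * S) * (h₁ * w0) := by
    have hcd : h₁ - φ ≤ h₁ * w0 := by linarith
    exact mul_le_mul hΦ4 hcd (by linarith) (mul_nonneg h₄n hSn)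
  calc Φ * (h₅ * (h₁ - φ)) = h₅ * (Φ * (h₁ - φ)) := by ring
    _ ≤ h₅ * ((h₄ * S) * (h₁ * w0)) := mul_le_mul_of_nonneg_left t1 h₅n
    _ = (h₁ * h₄) * (h₅ * (w0 * S)) := by ring
    _ ≤ h₁ * h₄ * E := mul_le_mul_of_nonneg_left hEb (mul_nonneg hh₁pos.le h₄n)

/-- upper quadratic bound of the error function Φ on SO(3),
on the sublevel set Φ ≤ φ < h₁. -/
theorem Phi_upper_bound
    (f₁ f₂ f₃ : ℝ) (hf₁ : 0 ≤ f₁) (hf₂ : 0 ≤ f₂) (hf₃ : 0 ≤ f₃)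
    (F : M3) (hF : F = Matrix.diagonal ![f₁, f₂, f₃])
    (P : M3) (hP : SO3 P)
    (Φ : ℝ) (hΦ : Φ = (1 / 2) * Matrix.trace (F * (1 - P)))
    (eP : V3) (heP : eP = (1 / 2 : ℝ) • vee (F * P - Pᵀ * F))
    (h₁ h₄ h₅ : ℝ)
    (hh₁ : h₁ = min (f₁ + f₂) (min (f₂ + f₃) (f₃ + f₁)))
    (hh₄ : h₄ = max (f₁ + f₂) (max (f₂ + f₃) (f₃ + f₁)))
    (hh₅ : h₅ = min ((f₁ + f₂) ^ 2) (min ((f₂ + f₃) ^ 2) ((f₃ + f₁) ^ 2)))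
    (hh₁pos : 0 < h₁)
    (φ : ℝ) (hφ : φ < h₁) (hΦφ : Φ ≤ φ) :
    Φ ≤ (h₁ * h₄ / (h₅ * (h₁ - φ))) * ‖eP‖ ^ 2 := by
  obtain ⟨hO, hD⟩ := hP
  have hO2 : P * Pᵀ = 1 := mul_eq_one_comm.mp hO
  have hadj : Matrix.adjugate P = Pᵀ := by
    calc Matrix.adjugate P = Matrix.adjugate P * (P * Pᵀ) := by rw [hO2, mul_one]
    _ = (Matrix.adjugate P * P) * Pᵀ := by rw [mul_assoc]
    _ = Pᵀ := by rw [Matrix.adjugate_mul, hD, one_smul, one_mul]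
  have hR0 : P 0 0 ^ 2 + P 0 1 ^ 2 + P 0 2 ^ 2 = 1 := by
    have := congrFun (congrFun hO2 0) 0
    simp [Matrix.mul_apply, Fin.sum_univ_three, Matrix.one_apply] at this
    linear_combination this
  have hR1 : P 1 0 ^ 2 + P 1 1 ^ 2 + P 1 2 ^ 2 = 1 := by
    have := congrFun (congrFun hO2 1) 1
    simp [Matrix.mul_apply, Fin.sum_univ_three, Matrix.one_apply] at this
    linear_combination this
  have hR2 : P 2 0 ^ 2 + P 2 1 ^ 2 + P 2 2 ^ 2 = 1 := by
    have := congrFun (congrFun hO2 2) 2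
    simp [Matrix.mul_apply, Fin.sum_univ_three, Matrix.one_apply] at this
    linear_combination this
  have hC0 : P 0 0 ^ 2 + P 1 0 ^ 2 + P 2 0 ^ 2 = 1 := by
    have := congrFun (congrFun hO 0) 0
    simp [Matrix.mul_apply, Fin.sum_univ_three, Matrix.one_apply] at this
    linear_combination this
  have hC1 : P 0 1 ^ 2 + P 1 1 ^ 2 + P 2 1 ^ 2 = 1 := by
    have := congrFun (congrFun hO 1) 1
    simp [Matrix.mul_apply, Fin.sum_univ_three, Matrix.one_apply] at this
    linear_combination this
  have hC2 : P 0 2 ^ 2 + P 1 2 ^ 2 + P 2 2 ^ 2 = 1 := by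
    have := congrFun (congrFun hO 2) 2
    simp [Matrix.mul_apply, Fin.sum_univ_three, Matrix.one_apply] at this
    linear_combination this
  have hK0 : P 1 1 * P 2 2 - P 1 2 * P 2 1 = P 0 0 := by
    have := congrFun (congrFun hadj 0) 0
    rw [Matrix.adjugate_fin_three] at this
    simpa using this
  have hK1 : P 0 0 * P 2 2 - P 0 2 * P 2 0 = P 1 1 := by
    have := congrFun (congrFun hadj 1) 1
    rw [Matrix.adjugate_fin_three] at this
    simpa using this
  have hK2 : P 0 0 * P 1 1 - P 0 1 * P 1 0 = P 2 2 := by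
    have := congrFun (congrFun hadj 2) 2
    rw [Matrix.adjugate_fin_three] at this
    simpa using this
  have hPhi : Φ = (f₁ * (1 - P 0 0) + f₂ * (1 - P 1 1) + f₃ * (1 - P 2 2)) / 2 := by
    rw [hΦ, hF, Matrix.trace_fin_three]
    simp [Matrix.mul_apply, Fin.sum_univ_three, Matrix.diagonal, Matrix.one_apply,
      Matrix.sub_apply]
    ring
  have he0 : eP 0 = (f₃ * P 2 1 - f₂ * P 1 2) / 2 := by
    rw [heP]
    simp [vee, Matrix.sub_apply, Matrix.mul_apply, Fin.sum_univ_three, hF,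
      Matrix.diagonal, Matrix.transpose_apply]
    ring
  have he1 : eP 1 = (f₁ * P 0 2 - f₃ * P 2 0) / 2 := by
    rw [heP]
    simp [vee, Matrix.sub_apply, Matrix.mul_apply, Fin.sum_univ_three, hF,
      Matrix.diagonal, Matrix.transpose_apply]
    ring
  have he2 : eP 2 = (f₂ * P 1 0 - f₁ * P 0 1) / 2 := by
    rw [heP]
    simp [vee, Matrix.sub_apply, Matrix.mul_apply, Fin.sum_univ_three, hF,
      Matrix.diagonal, Matrix.transpose_apply]
    ring
  have hEE : ‖eP‖ ^ 2 = ((f₃ * P 2 1 - f₂ * P 1 2) / 2) ^ 2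
      + ((f₁ * P 0 2 - f₃ * P 2 0) / 2) ^ 2 + ((f₂ * P 1 0 - f₁ * P 0 1) / 2) ^ 2 := by
    rw [EuclideanSpace.norm_eq, Real.sq_sqrt (by positivity)]
    simp [Fin.sum_univ_three, Real.norm_eq_abs, sq_abs, he0, he1, he2]
  have key := Phi_upper_aux f₁ f₂ f₃ (P 0 0) (P 0 1) (P 0 2) (P 1 0) (P 1 1) (P 1 2)
    (P 2 0) (P 2 1) (P 2 2) hR0 hR1 hR2 hC0 hC1 hC2 hK0 hK1 hK2 Φ hPhi
    (‖eP‖ ^ 2) hEE h₁ h₄ h₅ hh₁ hh₄ hh₅ hh₁pos φ hφ hΦφ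
  have h3 : 0 < f₁ + f₂ ∧ 0 < f₂ + f₃ ∧ 0 < f₃ + f₁ := by
    rw [hh₁, lt_min_iff, lt_min_iff] at hh₁pos
    exact ⟨hh₁pos.1, hh₁pos.2.1, hh₁pos.2.2⟩
  have h₅pos : 0 < h₅ := by
    rw [hh₅]
    exact lt_min (pow_pos h3.1 2) (lt_min (pow_pos h3.2.1 2) (pow_pos h3.2.2 2))
  have hden : 0 < h₅ * (h₁ - φ) := mul_pos h₅pos (by linarith)
  rw [div_mul_eq_mul_div, le_div_iff₀ hden]
  calc Φ * (h₅ * (h₁ - φ)) ≤ h₁ * h₄ * ‖eP‖ ^ 2 := key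
    _ = h₁ * h₄ * ‖eP‖ ^ 2 := rfl
end
end

section
/- Along trajectories of the attitude kinematics, the configuration error function satisfies d/dt Ψ₁₂ = e₁₂ · e_{Ω₁} + e₂₁ · e_{Ω₂}, where e_{Ωᵢ}(t) = Ωᵢ(t) − Ω^dᵢ(t). -/
noncomputable section
open Matrix

attribute [local instance] Matrix.normedAddCommGroup Matrix.normedSpace

lemma entry_hasDerivAt {A : ℝ → M3} {A' : M3} {t : ℝ} (h : HasDerivAt A A' t) (i j : Fin 3) :
    HasDerivAt (fun s => A s i j) (A' i j) t := by
  let L : M3 →ₗ[ℝ] ℝ :=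
    { toFun := fun M => M i j, map_add' := fun _ _ => rfl, map_smul' := fun _ _ => rfl }
  exact L.toContinuousLinearMap.hasFDerivAt.comp_hasDerivAt t h

lemma lagrange (u v : V3) :
    dot3 (cross3 u v) (cross3 u v) = dot3 u u * dot3 v v - (dot3 u v)^2 := by
  simp [cross3, dot3]; ring

lemma dot3_matVec_transpose (A : M3) (hA : A * Aᵀ = 1) (x y : V3) :
    dot3 (matVec Aᵀ x) (matVec Aᵀ y) = dot3 x y := by
  have h : ∀ i j : Fin 3, (A * Aᵀ) i j = (1 : M3) i j := fun i j => by rw [hA]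
  have h00 := h 0 0; have h01 := h 0 1; have h02 := h 0 2
  have h10 := h 1 0; have h11 := h 1 1; have h12 := h 1 2
  have h20 := h 2 0; have h21 := h 2 1; have h22 := h 2 2
  simp [Matrix.mul_apply, Fin.sum_univ_three, Matrix.one_apply] at h00 h01 h02 h10 h11 h12 h20 h21 h22
  simp [dot3, matVec, Matrix.mulVec, dotProduct, Fin.sum_univ_three]
  linear_combination x 0 * y 0 * h00 + x 0 * y 1 * h01 + x 0 * y 2 * h02 +
    x 1 * y 0 * h10 + x 1 * y 1 * h11 + x 1 * y 2 * h12 +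
    x 2 * y 0 * h20 + x 2 * y 1 * h21 + x 2 * y 2 * h22

lemma norm_eq_sqrt_dot3 (x : V3) : ‖x‖ = Real.sqrt (dot3 x x) := by
  rw [EuclideanSpace.norm_eq]
  congr 1
  simp [dot3, Fin.sum_univ_three]
  ring

lemma bderiv (R : ℝ → M3) (w : V3) (s : V3) (t : ℝ)
    (hR : HasDerivAt R (R t * hat w) t) (i : Fin 3) :
    HasDerivAt (fun u => matVec (R u)ᵀ s i) (cross3 (matVec (R t)ᵀ s) w i) t := by
  have heq : (fun u => matVec (R u)ᵀ s i)
      = fun u => R u 0 i * s 0 + R u 1 i * s 1 + R u 2 i * s 2 := by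
    funext u
    simp [matVec, Matrix.mulVec, dotProduct, Fin.sum_univ_three]
  rw [heq]
  have H := (((entry_hasDerivAt hR 0 i).mul_const (s 0)).add
      ((entry_hasDerivAt hR 1 i).mul_const (s 1))).add
      ((entry_hasDerivAt hR 2 i).mul_const (s 2))
  refine HasDerivAt.congr_deriv (H) ?_
  fin_cases i <;>
    simp [matVec, cross3, hat, Matrix.mul_apply, Matrix.mulVec, dotProduct,
      Fin.sum_univ_three] <;> ring

lemma crossderiv (u v : ℝ → V3) (w : V3) (t : ℝ)
    (hu : ∀ i, HasDerivAt (fun s => u s i) (cross3 (u t) w i) t)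
    (hv : ∀ i, HasDerivAt (fun s => v s i) (cross3 (v t) w i) t) (i : Fin 3) :
    HasDerivAt (fun s => cross3 (u s) (v s) i) (cross3 (cross3 (u t) (v t)) w i) t := by
  fin_cases i
  · show HasDerivAt (fun s => cross3 (u s) (v s) 0) (cross3 (cross3 (u t) (v t)) w 0) t
    have heq : (fun s => cross3 (u s) (v s) (0 : Fin 3))
        = fun s => u s 1 * v s 2 - u s 2 * v s 1 := by funext s; simp [cross3]
    rw [heq]
    refine HasDerivAt.congr_deriv (((hu 1).mul (hv 2)).sub ((hu 2).mul (hv 1))) ?_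
    simp [cross3]; ring
  · show HasDerivAt (fun s => cross3 (u s) (v s) 1) (cross3 (cross3 (u t) (v t)) w 1) t
    have heq : (fun s => cross3 (u s) (v s) (1 : Fin 3))
        = fun s => u s 2 * v s 0 - u s 0 * v s 2 := by funext s; simp [cross3]
    rw [heq]
    refine HasDerivAt.congr_deriv (((hu 2).mul (hv 0)).sub ((hu 0).mul (hv 2))) ?_
    simp [cross3]; ring
  · show HasDerivAt (fun s => cross3 (u s) (v s) 2) (cross3 (cross3 (u t) (v t)) w 2) t
    have heq : (fun s => cross3 (u s) (v s) (2 : Fin 3))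
        = fun s => u s 0 * v s 1 - u s 1 * v s 0 := by funext s; simp [cross3]
    rw [heq]
    refine HasDerivAt.congr_deriv (((hu 0).mul (hv 1)).sub ((hu 1).mul (hv 0))) ?_
    simp [cross3]; ring

set_option maxHeartbeats 1000000 in
lemma master (u v : ℝ → V3) (Q : ℝ → M3) (w₁ w₂ d₁ d₂ : V3) (t : ℝ)
    (hu : ∀ i, HasDerivAt (fun s => u s i) (cross3 (u t) w₂ i) t)
    (hv : ∀ i, HasDerivAt (fun s => v s i) (cross3 (v t) w₁ i) t)
    (hQ : ∀ i j, HasDerivAt (fun s => Q s i j) ((Q t * hat d₁ - hat d₂ * Q t) i j) t) :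
    HasDerivAt (fun s => dot3 (u s) (matVec (Q s) (v s)))
      (dot3 (cross3 (matVec (Q t)ᵀ (u t)) (v t)) (w₁ - d₁)
        + dot3 (cross3 (matVec (Q t) (v t)) (u t)) (w₂ - d₂)) t := by
  have heq : (fun s => dot3 (u s) (matVec (Q s) (v s)))
      = fun s => ((((((((u s 0 * Q s 0 0 * v s 0 + u s 0 * Q s 0 1 * v s 1)
          + u s 0 * Q s 0 2 * v s 2) + u s 1 * Q s 1 0 * v s 0)
          + u s 1 * Q s 1 1 * v s 1) + u s 1 * Q s 1 2 * v s 2)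
          + u s 2 * Q s 2 0 * v s 0) + u s 2 * Q s 2 1 * v s 1)
          + u s 2 * Q s 2 2 * v s 2) := by
    funext s
    simp [dot3, matVec, Matrix.mulVec, dotProduct, Fin.sum_univ_three]
    ring
  rw [heq]
  have H := ((((((((((hu 0).mul (hQ 0 0)).mul (hv 0)).add
      (((hu 0).mul (hQ 0 1)).mul (hv 1))).add
      (((hu 0).mul (hQ 0 2)).mul (hv 2))).add
      (((hu 1).mul (hQ 1 0)).mul (hv 0))).add
      (((hu 1).mul (hQ 1 1)).mul (hv 1))).add
      (((hu 1).mul (hQ 1 2)).mul (hv 2))).add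
      (((hu 2).mul (hQ 2 0)).mul (hv 0))).add
      (((hu 2).mul (hQ 2 1)).mul (hv 1))).add
      (((hu 2).mul (hQ 2 2)).mul (hv 2))
  refine HasDerivAt.congr_deriv (H) ?_
  simp [dot3, cross3, matVec, hat, Matrix.mulVec, Matrix.vecMul, dotProduct, Matrix.mul_apply,
    Matrix.sub_apply, Matrix.transpose_apply, Fin.sum_univ_three, PiLp.sub_apply]
  ring
set_option maxHeartbeats 1000000 in
/-- derivative of the configuration error function. -/
theorem error_function_derivative
    (s₁₂ s₁₃ s₂₁ s₂₃ : V3)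
    (hs₁₂ : ‖s₁₂‖ = 1) (hs₁₃ : ‖s₁₃‖ = 1) (hs₂₁ : ‖s₂₁‖ = 1) (hs₂₃ : ‖s₂₃‖ = 1)
    (hopp : s₁₂ = -s₂₁)
    (s₁₂₃ s₂₁₃ : V3) (hs₁₂₃ : s₁₂₃ = cross3 s₁₂ s₁₃) (hs₂₁₃ : s₂₁₃ = cross3 s₂₁ s₂₃)
    (h₁ : s₁₂₃ ≠ 0) (h₂ : s₂₁₃ ≠ 0)
    (hnormal : ‖s₂₁₃‖⁻¹ • s₂₁₃ = -(‖s₁₂₃‖⁻¹ • s₁₂₃))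
    (Ω₁ Ω₂ Ωd₁ Ωd₂ : ℝ → V3)
    (hΩ₁ : Continuous Ω₁) (hΩ₂ : Continuous Ω₂)
    (hΩd₁ : Continuous Ωd₁) (hΩd₂ : Continuous Ωd₂)
    (R₁ R₂ Qd₁₂ : ℝ → M3)
    (hR₁SO : ∀ t, SO3 (R₁ t)) (hR₂SO : ∀ t, SO3 (R₂ t)) (hQdSO : ∀ t, SO3 (Qd₁₂ t))
    (hR₁ : ∀ t, HasDerivAt R₁ (R₁ t * hat (Ω₁ t)) t)
    (hR₂ : ∀ t, HasDerivAt R₂ (R₂ t * hat (Ω₂ t)) t)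
    (hQd : ∀ t, HasDerivAt Qd₁₂ (Qd₁₂ t * hat (Ωd₁ t) - hat (Ωd₂ t) * Qd₁₂ t) t)
    (Qd₂₁ : ℝ → M3) (hQd₂₁ : ∀ t, Qd₂₁ t = (Qd₁₂ t)ᵀ)
    (b₁₂ b₁₃ b₂₁ b₂₃ b₁₂₃ b₂₁₃ : ℝ → V3)
    (hb₁₂ : ∀ t, b₁₂ t = matVec (R₁ t)ᵀ s₁₂) (hb₁₃ : ∀ t, b₁₃ t = matVec (R₁ t)ᵀ s₁₃)
    (hb₂₁ : ∀ t, b₂₁ t = matVec (R₂ t)ᵀ s₂₁) (hb₂₃ : ∀ t, b₂₃ t = matVec (R₂ t)ᵀ s₂₃)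
    (hb₁₂₃ : ∀ t, b₁₂₃ t = cross3 (b₁₂ t) (b₁₃ t))
    (hb₂₁₃ : ∀ t, b₂₁₃ t = cross3 (b₂₁ t) (b₂₃ t))
    (a₁₂ : ℝ → ℝ) (ha₁₂ : ∀ t, a₁₂ t = ‖b₂₁₃ t‖ * ‖b₁₂₃ t‖)
    (kα kβ : ℝ) (hkα : 0 < kα) (hkβ : 0 < kβ)
    (e₁₂ : ℝ → V3)
    (he₁₂ : ∀ t, e₁₂ t = kα • cross3 (matVec (Qd₂₁ t) (b₂₁ t)) (b₁₂ t)
        + (kβ / a₁₂ t) • cross3 (matVec (Qd₂₁ t) (b₂₁₃ t)) (b₁₂₃ t))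
    (e₂₁ : ℝ → V3)
    (he₂₁ : ∀ t, e₂₁ t = kα • cross3 (matVec (Qd₁₂ t) (b₁₂ t)) (b₂₁ t)
        + (kβ / a₁₂ t) • cross3 (matVec (Qd₁₂ t) (b₁₂₃ t)) (b₂₁₃ t))
    (Ψ : ℝ → ℝ)
    (hΨ : ∀ t, Ψ t = kα * (1 + dot3 (b₂₁ t) (matVec (Qd₁₂ t) (b₁₂ t)))
        + kβ * (1 + (a₁₂ t)⁻¹ * dot3 (b₂₁₃ t) (matVec (Qd₁₂ t) (b₁₂₃ t)))) :
    ∀ t, HasDerivAt Ψ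
      (dot3 (e₁₂ t) (Ω₁ t - Ωd₁ t) + dot3 (e₂₁ t) (Ω₂ t - Ωd₂ t)) t := by
  intro t
  have hO₁ : ∀ s, R₁ s * (R₁ s)ᵀ = 1 := fun s => mul_eq_one_comm.mp (hR₁SO s).1
  have hO₂ : ∀ s, R₂ s * (R₂ s)ᵀ = 1 := fun s => mul_eq_one_comm.mp (hR₂SO s).1
  have hnb₂ : ∀ s, ‖b₂₁₃ s‖ = ‖s₂₁₃‖ := by
    intro s
    rw [hb₂₁₃ s, hs₂₁₃, norm_eq_sqrt_dot3, norm_eq_sqrt_dot3]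
    congr 1
    rw [lagrange, lagrange, hb₂₁ s, hb₂₃ s, dot3_matVec_transpose _ (hO₂ s),
      dot3_matVec_transpose _ (hO₂ s), dot3_matVec_transpose _ (hO₂ s)]
  have hnb₁ : ∀ s, ‖b₁₂₃ s‖ = ‖s₁₂₃‖ := by
    intro s
    rw [hb₁₂₃ s, hs₁₂₃, norm_eq_sqrt_dot3, norm_eq_sqrt_dot3]
    congr 1
    rw [lagrange, lagrange, hb₁₂ s, hb₁₃ s, dot3_matVec_transpose _ (hO₁ s),
      dot3_matVec_transpose _ (hO₁ s), dot3_matVec_transpose _ (hO₁ s)]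
  have hac : ∀ s, a₁₂ s = ‖s₂₁₃‖ * ‖s₁₂₃‖ := fun s => by rw [ha₁₂, hnb₂, hnb₁]
  have hd₁₂ : ∀ i, HasDerivAt (fun s => b₁₂ s i) (cross3 (b₁₂ t) (Ω₁ t) i) t := by
    intro i
    have hfun : (fun s => b₁₂ s i) = fun s => matVec (R₁ s)ᵀ s₁₂ i :=
      funext fun s => by rw [hb₁₂]
    rw [hfun, hb₁₂ t]
    exact bderiv R₁ (Ω₁ t) s₁₂ t (hR₁ t) i
  have hd₁₃ : ∀ i, HasDerivAt (fun s => b₁₃ s i) (cross3 (b₁₃ t) (Ω₁ t) i) t := by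
    intro i
    have hfun : (fun s => b₁₃ s i) = fun s => matVec (R₁ s)ᵀ s₁₃ i :=
      funext fun s => by rw [hb₁₃]
    rw [hfun, hb₁₃ t]
    exact bderiv R₁ (Ω₁ t) s₁₃ t (hR₁ t) i
  have hd₂₁ : ∀ i, HasDerivAt (fun s => b₂₁ s i) (cross3 (b₂₁ t) (Ω₂ t) i) t := by
    intro i
    have hfun : (fun s => b₂₁ s i) = fun s => matVec (R₂ s)ᵀ s₂₁ i :=
      funext fun s => by rw [hb₂₁]
    rw [hfun, hb₂₁ t]
    exact bderiv R₂ (Ω₂ t) s₂₁ t (hR₂ t) i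
  have hd₂₃ : ∀ i, HasDerivAt (fun s => b₂₃ s i) (cross3 (b₂₃ t) (Ω₂ t) i) t := by
    intro i
    have hfun : (fun s => b₂₃ s i) = fun s => matVec (R₂ s)ᵀ s₂₃ i :=
      funext fun s => by rw [hb₂₃]
    rw [hfun, hb₂₃ t]
    exact bderiv R₂ (Ω₂ t) s₂₃ t (hR₂ t) i
  have hd₁₂₃ : ∀ i, HasDerivAt (fun s => b₁₂₃ s i) (cross3 (b₁₂₃ t) (Ω₁ t) i) t := by
    intro i
    have hfun : (fun s => b₁₂₃ s i) = fun s => cross3 (b₁₂ s) (b₁₃ s) i :=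
      funext fun s => by rw [hb₁₂₃]
    rw [hfun, hb₁₂₃ t]
    exact crossderiv _ _ _ t hd₁₂ hd₁₃ i
  have hd₂₁₃ : ∀ i, HasDerivAt (fun s => b₂₁₃ s i) (cross3 (b₂₁₃ t) (Ω₂ t) i) t := by
    intro i
    have hfun : (fun s => b₂₁₃ s i) = fun s => cross3 (b₂₁ s) (b₂₃ s) i :=
      funext fun s => by rw [hb₂₁₃]
    rw [hfun, hb₂₁₃ t]
    exact crossderiv _ _ _ t hd₂₁ hd₂₃ i
  have hdQ : ∀ i j, HasDerivAt (fun s => Qd₁₂ s i j)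
      ((Qd₁₂ t * hat (Ωd₁ t) - hat (Ωd₂ t) * Qd₁₂ t) i j) t :=
    fun i j => entry_hasDerivAt (hQd t) i j
  have HF := master b₂₁ b₁₂ Qd₁₂ (Ω₁ t) (Ω₂ t) (Ωd₁ t) (Ωd₂ t) t hd₂₁ hd₁₂ hdQ
  have HG := master b₂₁₃ b₁₂₃ Qd₁₂ (Ω₁ t) (Ω₂ t) (Ωd₁ t) (Ωd₂ t) t hd₂₁₃ hd₁₂₃ hdQ
  have hΨfun : Ψ = fun s => kα * (1 + dot3 (b₂₁ s) (matVec (Qd₁₂ s) (b₁₂ s)))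
      + kβ * (1 + (‖s₂₁₃‖ * ‖s₁₂₃‖)⁻¹ * dot3 (b₂₁₃ s) (matVec (Qd₁₂ s) (b₁₂₃ s))) :=
    funext fun s => by rw [hΨ, hac]
  rw [hΨfun]
  have H := ((HF.const_add 1).const_mul kα).add
    (((HG.const_mul ((‖s₂₁₃‖ * ‖s₁₂₃‖)⁻¹)).const_add 1).const_mul kβ)
  refine HasDerivAt.congr_deriv (H) ?_
  rw [he₁₂ t, he₂₁ t, hQd₂₁ t, hac t]
  simp [dot3, cross3, matVec, Matrix.mulVec, dotProduct, Fin.sum_univ_three,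
    Matrix.transpose_apply, PiLp.add_apply, PiLp.smul_apply, PiLp.sub_apply,
    smul_eq_mul, div_eq_mul_inv]
  ring
end
end

section
/- Let g₁, g₂ be positive constants with g₁ ≠ g₂ and let G = diag(g₁, g₂, 0). A rotation matrix P ∈ SO(3) satisfies GP − PᵀG = 0 (equivalently, (GP − PᵀG)^∨ = 0, i.e., P is a critical point of the error function P ↦ tr[G(I−P)]) if and only if P is one of the four matrices I, diag(1,−1,−1), diag(−1,1,−1), diag(−1,−1,1). -/
noncomputable section
open Matrix

attribute [local instance] Matrix.normedAddCommGroup Matrix.normedSpace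

/-- critical points of P ↦ tr[G(I−P)] on SO(3). -/
theorem critical_points_of_error_function
    (g₁ g₂ : ℝ) (hg₁ : 0 < g₁) (hg₂ : 0 < g₂) (hne : g₁ ≠ g₂)
    (G : M3) (hG : G = Matrix.diagonal ![g₁, g₂, 0])
    (P : M3) (hP : SO3 P) :
    G * P - Pᵀ * G = 0 ↔
      (P = 1 ∨ P = Matrix.diagonal ![1, -1, -1] ∨
        P = Matrix.diagonal ![-1, 1, -1] ∨ P = Matrix.diagonal ![-1, -1, 1]) := by
  subst hG
  obtain ⟨horth, hdet⟩ := hP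
  constructor
  · intro h
    have h02 := congrFun (congrFun h 0) 2
    have h12 := congrFun (congrFun h 1) 2
    have h01 := congrFun (congrFun h 0) 1
    simp [Matrix.sub_apply, Matrix.mul_apply, Fin.sum_univ_three, Matrix.diagonal_apply,
      Matrix.transpose_apply] at h02 h12 h01
    have h02' : P 0 2 = 0 := h02.resolve_left hg₁.ne'
    have h12' : P 1 2 = 0 := h12.resolve_left hg₂.ne'
    have horth' : P * Pᵀ = 1 := mul_eq_one_comm.mp horth
    have c22 := congrFun (congrFun horth 2) 2
    have c02 := congrFun (congrFun horth 0) 2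
    have c12 := congrFun (congrFun horth 1) 2
    have c00 := congrFun (congrFun horth 0) 0
    have c11 := congrFun (congrFun horth 1) 1
    have r00 := congrFun (congrFun horth' 0) 0
    simp [Matrix.mul_apply, Fin.sum_univ_three, Matrix.transpose_apply, Matrix.one_apply,
      h02', h12'] at c22 c02 c12 c00 c11 r00
    have h22ne : P 2 2 ≠ 0 := by intro hz; rw [hz] at c22; norm_num at c22
    have h20' : P 2 0 = 0 := c02.resolve_right h22ne
    have h21' : P 2 1 = 0 := c12.resolve_right h22ne
    rw [h20'] at c00
    rw [h21'] at c11
    have hsq : P 0 1 ^ 2 * (g₁ ^ 2 - g₂ ^ 2) = 0 := by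
      linear_combination (g₁ * P 0 1 + g₂ * P 1 0) * h01 + g₂ ^ 2 * c00 - g₂ ^ 2 * r00
    have hgg : g₁ ^ 2 - g₂ ^ 2 ≠ 0 := by
      intro hgg
      have h' : (g₁ - g₂) * (g₁ + g₂) = 0 := by linear_combination hgg
      rcases mul_eq_zero.mp h' with h'' | h''
      · exact hne (by linarith)
      · linarith
    have h01' : P 0 1 = 0 := by
      rcases mul_eq_zero.mp hsq with h' | h'
      · exact pow_eq_zero_iff (by norm_num) |>.mp h'
      · exact absurd h' hgg
    have h10' : P 1 0 = 0 := by
      rw [h01'] at h01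
      simp at h01
      rcases h01 with h' | h'
      · exact h'
      · exact absurd h' hg₂.ne'
    rw [h10'] at c00
    rw [h01'] at c11
    simp at c00 c11
    rw [Matrix.det_fin_three, h01', h10', h02', h12', h20', h21'] at hdet
    have h22 : P 2 2 = P 0 0 * P 1 1 := by
      have hdet' : P 0 0 * P 1 1 * P 2 2 = 1 := by linear_combination hdet
      linear_combination P 0 0 * P 1 1 * hdet' - P 2 2 * c00 - P 2 2 * P 0 0 * P 0 0 * c11
    rcases mul_self_eq_one_iff.mp c00 with h00 | h00 <;>
      rcases mul_self_eq_one_iff.mp c11 with h11 | h11 <;>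
      rw [h00, h11] at h22 <;> norm_num at h22
    · left
      ext i j
      fin_cases i <;> fin_cases j <;>
        simp [h00, h11, h22, h01', h10', h02', h12', h20', h21', Matrix.one_apply]
    · right; left
      ext i j
      fin_cases i <;> fin_cases j <;>
        simp [h00, h11, h22, h01', h10', h02', h12', h20', h21', Matrix.diagonal_apply]
    · right; right; left
      ext i j
      fin_cases i <;> fin_cases j <;>
        simp [h00, h11, h22, h01', h10', h02', h12', h20', h21', Matrix.diagonal_apply]
    · right; right; right
      ext i j
      fin_cases i <;> fin_cases j <;>
        simp [h00, h11, h22, h01', h10', h02', h12', h20', h21', Matrix.diagonal_apply]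
  · intro h
    rcases h with h | h | h | h <;> subst h <;>
      ext i j <;> fin_cases i <;> fin_cases j <;>
        simp [Matrix.sub_apply, Matrix.mul_apply, Fin.sum_univ_three, Matrix.diagonal_apply,
          Matrix.transpose_apply, Matrix.one_apply]
end
end

section
/- Let J be a symmetric positive-definite real 3×3 matrix, k_Ω > 0, let Ω^d : ℝ → ℝ³ be differentiable, e : ℝ → ℝ³ be continuous, and let Ω : ℝ → ℝ³ be differentiable satisfying the rigid-body attitude dynamics J Ω̇ + Ω × (JΩ) = u with the feedback control u = −e − k_Ω e_Ω + Ω̂^d J(e_Ω + Ω^d) + J Ω̇^d, where e_Ω = Ω − Ω^d. Then the tracking error satisfies the closed-loop dynamics J ė_Ω = (J e_Ω + J Ω^d) × e_Ω − e − k_Ω e_Ω. -/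
noncomputable section
open Matrix

attribute [local instance] Matrix.normedAddCommGroup Matrix.normedSpace

/-- closed-loop tracking error dynamics. -/
theorem closed_loop_error_dynamics
    (J : M3) (hJsym : J.IsSymm) (hJpos : J.PosDef)
    (kΩ : ℝ) (hkΩ : 0 < kΩ)
    (Ωd Ωd' : ℝ → V3) (hΩd : ∀ t, HasDerivAt Ωd (Ωd' t) t)
    (e : ℝ → V3) (he : Continuous e)
    (Ω Ω' : ℝ → V3) (hΩ : ∀ t, HasDerivAt Ω (Ω' t) t)
    (eΩ : ℝ → V3) (heΩ : ∀ t, eΩ t = Ω t - Ωd t)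
    (u : ℝ → V3)
    (hu : ∀ t, u t = -e t - kΩ • eΩ t
        + matVec (hat (Ωd t)) (matVec J (eΩ t + Ωd t)) + matVec J (Ωd' t))
    (hdyn : ∀ t, matVec J (Ω' t) + cross3 (Ω t) (matVec J (Ω t)) = u t) :
    ∀ t, matVec J (Ω' t - Ωd' t) =
      cross3 (matVec J (eΩ t) + matVec J (Ωd t)) (eΩ t) - e t - kΩ • eΩ t := by
  intro t
  have h := hdyn t
  rw [hu t] at h
  rw [heΩ t] at h ⊢
  have hΩeq : Ω t - Ωd t + Ωd t = Ω t := by abel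
  rw [hΩeq] at h
  ext i
  fin_cases i
  · have h0 := congrArg (fun v : V3 => v 0) h
    simp [matVec, cross3, hat, Matrix.mulVec, Matrix.vecMul, dotProduct, Fin.sum_univ_three] at h0 ⊢
    linear_combination h0
  · have h1 := congrArg (fun v : V3 => v 1) h
    simp [matVec, cross3, hat, Matrix.mulVec, Matrix.vecMul, dotProduct, Fin.sum_univ_three] at h1 ⊢
    linear_combination h1
  · have h2 := congrArg (fun v : V3 => v 2) h
    simp [matVec, cross3, hat, Matrix.mulVec, Matrix.vecMul, dotProduct, Fin.sum_univ_three] at h2 ⊢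
    linear_combination h2
end
end
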